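/- For every integer n ≥ 3, the cardinality of V_n^+(ℤ) is at least f_n. -/

import Mathlib

/-- The 2×n matrix A_n whose first row is (f_1, …, f_n) and second row is (f_0, …, f_{n-1}). -/
noncomputable def Amat (n : ℕ) : Matrix (Fin 2) (Fin n) ℝ :=
  Matrix.of fun r j => if r = 0 then (Nat.fib ((j : ℕ) + 1) : ℝ) else (Nat.fib (j : ℕ) : ℝ)

/-- V_n^+(ℝ): the set of x ∈ ℝ^n with A_n x = (f_n, f_{n-1})^T and all entries nonnegative. -/
def Vplus (n : ℕ) : Set (Fin n → ℝ) :=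
  {x | (Amat n).mulVec x = ![(Nat.fib n : ℝ), (Nat.fib (n - 1) : ℝ)] ∧ ∀ i, 0 ≤ x i}

/-- V_n^+(ℤ): elements of V_n^+(ℝ) with all entries integers. -/
def VplusZ (n : ℕ) : Set (Fin n → ℝ) :=
  {x | x ∈ Vplus n ∧ ∀ i, ∃ m : ℤ, x i = (m : ℝ)}

/-- the candidate vector -/
def xv (n : ℕ) (a b s t : ℕ) : Fin n → ℝ := fun j =>
  if (j : ℕ) = 0 then (a : ℝ) else if (j : ℕ) = 1 then (b : ℝ)
  else if (j : ℕ) = 2 then (s : ℝ) else if (j : ℕ) = 3 then (t : ℝ) else 0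

lemma sum_xv4 (n : ℕ) (h4 : 4 ≤ n) (f : Fin n → ℝ) (a b s t : ℕ) :
    ∑ j, f j * xv n a b s t j =
      a * f ⟨0, by omega⟩ + b * f ⟨1, by omega⟩ + s * f ⟨2, by omega⟩ + t * f ⟨3, by omega⟩ := by
  have key : ∀ j : Fin n, f j * xv n a b s t j =
      (if j = (⟨0, by omega⟩ : Fin n) then (a : ℝ) * f ⟨0, by omega⟩ else 0) +
      (if j = (⟨1, by omega⟩ : Fin n) then (b : ℝ) * f ⟨1, by omega⟩ else 0) +
      (if j = (⟨2, by omega⟩ : Fin n) then (s : ℝ) * f ⟨2, by omega⟩ else 0) +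
      (if j = (⟨3, by omega⟩ : Fin n) then (t : ℝ) * f ⟨3, by omega⟩ else 0) := by
    intro j
    rcases j with ⟨jv, hj⟩
    simp only [xv, Fin.mk.injEq, Fin.ext_iff]
    split_ifs <;> simp_all <;> ring
  simp_rw [key, Finset.sum_add_distrib, Finset.sum_ite_eq', Finset.mem_univ, if_true]

lemma xv_mem (n a b s t : ℕ) (hn : 3 ≤ n)
    (h1 : a + b + 2*s + 3*t = Nat.fib n) (h2 : b + s + 2*t = Nat.fib (n-1))
    (h3 : 4 ≤ n ∨ t = 0) : xv n a b s t ∈ VplusZ n := by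
  refine ⟨⟨?_, ?_⟩, ?_⟩
  · funext r
    have hmv : (Amat n).mulVec (xv n a b s t) r = ∑ j, Amat n r j * xv n a b s t j := rfl
    by_cases h4 : 4 ≤ n
    · rw [hmv, sum_xv4 n h4]
      have hA : ∀ k (hk : k < n), Amat n r ⟨k, hk⟩
          = if r = 0 then (Nat.fib (k+1) : ℝ) else (Nat.fib k : ℝ) := fun k hk => rfl
      fin_cases r <;>
        simp only [hA, if_true, if_false, Matrix.cons_val_zero, Matrix.cons_val_one,
          Matrix.head_cons] <;>
        norm_num [show Nat.fib 0 = 0 from rfl, show Nat.fib 1 = 1 from rfl,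
          show Nat.fib 2 = 1 from rfl, show Nat.fib 3 = 2 from rfl, show Nat.fib 4 = 3 from rfl]
      · exact_mod_cast congrArg (Nat.cast : ℕ → ℝ) (by omega : a + b + s*2 + t*3 = Nat.fib n)
      · exact_mod_cast congrArg (Nat.cast : ℕ → ℝ) (by omega : b + s + t*2 = Nat.fib (n-1))
    · have ht0 : t = 0 := h3.resolve_left h4
      have hn3 : n = 3 := by omega
      subst hn3; subst ht0
      have hf3 : Nat.fib 3 = 2 := rfl
      have hf2 : Nat.fib (3-1) = 1 := rfl
      rw [hmv, Fin.sum_univ_three]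
      have e0 : ((0 : Fin 3) : ℕ) = 0 := rfl
      have e1 : ((1 : Fin 3) : ℕ) = 1 := rfl
      have e2 : ((2 : Fin 3) : ℕ) = 2 := rfl
      simp only [xv, e0, e1, e2]
      norm_num
      have hA : ∀ k (hk : k < 3) r, Amat 3 r ⟨k, hk⟩
          = if r = 0 then (Nat.fib (k+1) : ℝ) else (Nat.fib k : ℝ) := fun k hk r => rfl
      fin_cases r <;>
        simp only [show (0 : Fin 3) = ⟨0, by omega⟩ from rfl, show (1 : Fin 3) = ⟨1, by omega⟩ from rfl,
          show (2 : Fin 3) = ⟨2, by omega⟩ from rfl, hA, if_true, if_false,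
          Matrix.cons_val_zero, Matrix.cons_val_one, Matrix.head_cons] <;>
        norm_num [show Nat.fib 0 = 0 from rfl, show Nat.fib 1 = 1 from rfl,
          show Nat.fib 2 = 1 from rfl, show Nat.fib 3 = 2 from rfl]
      · exact_mod_cast congrArg (Nat.cast : ℕ → ℝ) (by omega : a + b + 2*s = 2)
      · exact_mod_cast congrArg (Nat.cast : ℕ → ℝ) (by omega : b + s = 1)
  · intro i
    unfold xv
    split_ifs <;> positivity
  · intro i
    unfold xv
    split_ifs
    exacts [⟨a, by norm_num⟩, ⟨b, by norm_num⟩, ⟨s, by norm_num⟩, ⟨t, by norm_num⟩, ⟨0, by norm_num⟩]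

def tS (F m : ℕ) : ℕ := if m ≤ F then 0 else if m ≤ 2*F then 1 else 2
def sS (F m : ℕ) : ℕ := if m ≤ F then m else if m ≤ 2*F then m - F - 1 else m - 2*F - 1

lemma tS_sS_spec (F m : ℕ) :
    (tS F m = 0 ∧ sS F m = m) ∨ (tS F m = 1 ∧ m = sS F m + F + 1) ∨
    (tS F m = 2 ∧ m = sS F m + 2*F + 1) := by
  unfold tS sS; split_ifs <;> omega

lemma tS_sS_bounds (F E m : ℕ) (hEF : E ≤ F) (hE : E = 0 → F = 1) (hm : m < 2*F + E) :
    sS F m + tS F m ≤ F ∧ sS F m + 2 * tS F m ≤ F + E ∧ tS F m ≤ E := by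
  unfold tS sS; split_ifs <;> omega

/-- For every integer n ≥ 3, the cardinality of V_n^+(ℤ) is at least f_n. -/
theorem stmt13 (n : ℕ) (hn : 3 ≤ n) :
    (Nat.fib n : Cardinal) ≤ Cardinal.mk (VplusZ n) := by
  set F := Nat.fib (n-2) with hF
  set E := Nat.fib (n-3) with hEdef
  have hG : Nat.fib (n-1) = F + E := by
    rw [hF, hEdef, show n - 1 = (n-3) + 2 by omega, show n - 2 = (n-3) + 1 by omega,
      Nat.fib_add_two, Nat.add_comm]
  have hH : Nat.fib n = 2*F + E := by
    rw [show n = (n-2) + 2 by omega, Nat.fib_add_two, ← hF,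
      show (n-2) + 1 = n - 1 by omega, hG]; ring
  have hEF : E ≤ F := Nat.fib_mono (by omega)
  have hE0 : E = 0 → F = 1 := by
    intro h
    have : n - 3 = 0 := Nat.fib_eq_zero.mp (by rw [← hEdef]; exact h)
    have : n = 3 := by omega
    simp [hF, this]
  -- the injection
  have hmem : ∀ m : Fin (Nat.fib n),
      xv n (F - sS F m - tS F m) (Nat.fib (n-1) - sS F m - 2 * tS F m) (sS F m) (tS F m)
        ∈ VplusZ n := by
    intro m
    obtain ⟨b1, b2, b3⟩ := tS_sS_bounds F E m hEF hE0 (by rw [← hH]; exact m.2)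
    apply xv_mem n _ _ _ _ hn
    · omega
    · omega
    · by_cases h4 : 4 ≤ n
      · exact Or.inl h4
      · right
        have : E = 0 := by
          rw [hEdef, show n - 3 = 0 by omega]; rfl
        omega
  let φ : Fin (Nat.fib n) → VplusZ n := fun m =>
    ⟨xv n (F - sS F m - tS F m) (Nat.fib (n-1) - sS F m - 2 * tS F m) (sS F m) (tS F m), hmem m⟩
  have hinj : Function.Injective φ := by
    intro m1 m2 h
    have hval := congrArg Subtype.val h
    -- recover s
    have hs : sS F m1 = sS F m2 := by
      have := congrFun hval ⟨2, by omega⟩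
      simp only [φ, xv] at this
      norm_num at this
      exact_mod_cast this
    have ht : tS F m1 = tS F m2 := by
      by_cases h4 : 4 ≤ n
      · have := congrFun hval ⟨3, by omega⟩
        simp only [φ, xv] at this
        norm_num at this
        exact_mod_cast this
      · have hE : E = 0 := by rw [hEdef, show n - 3 = 0 by omega]; rfl
        obtain ⟨_, _, b1⟩ := tS_sS_bounds F E m1 hEF hE0 (by rw [← hH]; exact m1.2)
        obtain ⟨_, _, b2⟩ := tS_sS_bounds F E m2 hEF hE0 (by rw [← hH]; exact m2.2)
        omega
    have k1 := tS_sS_spec F m1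
    have k2 := tS_sS_spec F m2
    apply Fin.ext
    omega
  calc (Nat.fib n : Cardinal) = Cardinal.mk (Fin (Nat.fib n)) := by simp
    _ ≤ Cardinal.mk (VplusZ n) := Cardinal.mk_le_of_injective hinj
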